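/- Let ω > 0 and c with 0 < 2ω − c² sufficiently small, and let b(η) = a(η)/η² where a(η) = −(c²−4ω)η² + 4ω((η−1)ln(1−η) − η). Then b is strictly decreasing on [0, σ₀] where σ₀ = 3(2ω−c²)/(2ω), b(0) = 2ω − c² > 0, b(σ₀) ≤ 0, and hence b has a unique zero σ₁ ∈ (0, σ₀]. -/

import Mathlib

open Real Set

private lemma hd_log1m {s : ℝ} (h : s < 1) :
    HasDerivAt (fun t : ℝ => Real.log (1 - t)) (-(1 - s)⁻¹) s := by
  have h1 : (1 : ℝ) - s ≠ 0 := by linarith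
  have := ((hasDerivAt_id' (x := s)).const_sub 1).log h1
  convert this using 1
  field_simp


private lemma hd_N {s : ℝ} (h : s < 1) :
    HasDerivAt (fun t : ℝ => (t - 1) * Real.log (1 - t) - t) (Real.log (1 - s)) s := by
  have h1 : (1 : ℝ) - s ≠ 0 := by linarith
  have := (((hasDerivAt_id s).sub_const 1).mul (hd_log1m h)).sub (hasDerivAt_id s)
  convert this using 1 <;> first | rfl | (field_simp; simp only [id]; ring)

private lemma cont_log1m {s : Set ℝ} (h : ∀ z ∈ s, z < 1) :
    ContinuousOn (fun t : ℝ => Real.log (1 - t)) s := by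
  apply ContinuousOn.log (by fun_prop)
  intro z hz
  have := h z hz
  intro hc; rw [sub_eq_zero] at hc; linarith

private lemma l1 {t : ℝ} (h0 : 0 ≤ t) (h1 : t < 1) :
    Real.log (1 - t) + t + t ^ 2 / 2 ≤ 0 := by
  have key : AntitoneOn (fun s : ℝ => Real.log (1 - s) + s + s ^ 2 / 2) (Icc 0 t) := by
    apply antitoneOn_of_deriv_nonpos (convex_Icc 0 t)
    · apply ((cont_log1m (fun z hz => lt_of_le_of_lt hz.2 h1)).add continuousOn_id).add
      fun_prop
    · intro s hs
      rw [interior_Icc] at hs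
      exact (((hd_log1m (hs.2.trans h1)).add (hasDerivAt_id' (x := s))).add
        ((hasDerivAt_pow 2 s).div_const 2)).differentiableAt.differentiableWithinAt
    · intro s hs
      rw [interior_Icc] at hs
      have hs1 : s < 1 := hs.2.trans h1
      have hd := ((hd_log1m hs1).add (hasDerivAt_id' (x := s))).add ((hasDerivAt_pow 2 s).div_const 2)
      erw [hd.deriv]; norm_num
      have h2 : (0:ℝ) < 1 - s := by linarith
      have h3 := mul_inv_cancel₀ h2.ne'
      nlinarith [sq_nonneg s, inv_pos.mpr h2, mul_nonneg (mul_nonneg hs.1.le hs.1.le) (inv_pos.mpr h2).le]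
  have := key (left_mem_Icc.mpr h0) (right_mem_Icc.mpr h0) h0
  simpa using this

private lemma l2 {t : ℝ} (h0 : 0 ≤ t) (h1 : t < 1) :
    (t - 1) * Real.log (1 - t) - t + t ^ 2 / 2 + t ^ 3 / 6 ≤ 0 := by
  have key : AntitoneOn
      (fun s : ℝ => ((s - 1) * Real.log (1 - s) - s) + s ^ 2 / 2 + s ^ 3 / 6) (Icc 0 t) := by
    apply antitoneOn_of_deriv_nonpos (convex_Icc 0 t)
    · apply ContinuousOn.add
      apply ContinuousOn.add
      · exact (ContinuousOn.mul (by fun_prop)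
          (cont_log1m (fun z hz => lt_of_le_of_lt hz.2 h1))).sub continuousOn_id
      · fun_prop
      · fun_prop
    · intro s hs
      rw [interior_Icc] at hs
      exact (((hd_N (hs.2.trans h1)).add ((hasDerivAt_pow 2 s).div_const 2)).add
        ((hasDerivAt_pow 3 s).div_const 6)).differentiableAt.differentiableWithinAt
    · intro s hs
      rw [interior_Icc] at hs
      have hs1 : s < 1 := hs.2.trans h1
      have hd := ((hd_N hs1).add ((hasDerivAt_pow 2 s).div_const 2)).add
        ((hasDerivAt_pow 3 s).div_const 6)
      erw [hd.deriv]; norm_num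
      have := l1 hs.1.le hs1
      nlinarith [sq_nonneg s]
  have := key (left_mem_Icc.mpr h0) (right_mem_Icc.mpr h0) h0
  simpa using this

private lemma l3 {t : ℝ} (h0 : 0 < t) (h1 : t < 1) :
    (2 - t) * Real.log (1 - t) + 2 * t < 0 := by
  have key : StrictAntiOn
      (fun s : ℝ => (2 - s) * Real.log (1 - s) + 2 * s) (Icc 0 t) := by
    apply strictAntiOn_of_deriv_neg (convex_Icc 0 t)
    · exact (ContinuousOn.mul (by fun_prop)
        (cont_log1m (fun z hz => lt_of_le_of_lt hz.2 h1))).add (by fun_prop)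
    · intro s hs
      rw [interior_Icc] at hs
      have hs1 : s < 1 := hs.2.trans h1
      have hd := (((hasDerivAt_id' (x := s)).const_sub 2).mul (hd_log1m hs1)).add
        ((hasDerivAt_id' (x := s)).const_mul 2)
      erw [hd.deriv]
      have h2 : (0:ℝ) < 1 - s := by linarith
      have h3 := mul_inv_cancel₀ h2.ne'
      have h4 : Real.log ((1 - s)⁻¹) < (1 - s)⁻¹ - 1 := by
        apply Real.log_lt_sub_one_of_pos (by positivity)
        intro hc
        have : (1 - s) = 1 := by
          field_simp at hc; linarith
        linarith [hs.1, this]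
      rw [Real.log_inv] at h4
      nlinarith [inv_pos.mpr h2]
  have := key (left_mem_Icc.mpr h0.le) (right_mem_Icc.mpr h0.le) h0
  simpa using this

private lemma l4a {t : ℝ} (h0 : 0 ≤ t) (h1 : t ≤ 1/2) :
    0 ≤ Real.log (1 - t) + t + t ^ 2 := by
  have key : MonotoneOn (fun s : ℝ => Real.log (1 - s) + s + s ^ 2) (Icc 0 t) := by
    apply monotoneOn_of_deriv_nonneg (convex_Icc 0 t)
    · apply ((cont_log1m (fun z hz => by have := hz.2; linarith)).add continuousOn_id).add
      fun_prop
    · intro s hs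
      rw [interior_Icc] at hs
      have hs1 : s < 1 := by linarith [hs.2]
      exact (((hd_log1m hs1).add (hasDerivAt_id' (x := s))).add
        (hasDerivAt_pow 2 s)).differentiableAt.differentiableWithinAt
    · intro s hs
      rw [interior_Icc] at hs
      have hs1 : s < 1 := by linarith [hs.2]
      have hd := ((hd_log1m hs1).add (hasDerivAt_id' (x := s))).add (hasDerivAt_pow 2 s)
      erw [hd.deriv]; norm_num
      have h2 : (0:ℝ) < 1 - s := by linarith
      have h3 := mul_inv_cancel₀ h2.ne'
      have hs2 : s ≤ 1/2 := le_of_lt (lt_of_lt_of_le hs.2 h1)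
      nlinarith [inv_pos.mpr h2, mul_nonneg (mul_nonneg hs.1.le (by linarith : (0:ℝ) ≤ 1 - 2*s)) (inv_pos.mpr h2).le]
  have := key (left_mem_Icc.mpr h0) (right_mem_Icc.mpr h0) h0
  simpa using this

private lemma l4 {t : ℝ} (h0 : 0 ≤ t) (h1 : t ≤ 1/2) :
    0 ≤ (t - 1) * Real.log (1 - t) - t + t ^ 2 / 2 + t ^ 3 / 3 := by
  have key : MonotoneOn
      (fun s : ℝ => ((s - 1) * Real.log (1 - s) - s) + s ^ 2 / 2 + s ^ 3 / 3) (Icc 0 t) := by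
    apply monotoneOn_of_deriv_nonneg (convex_Icc 0 t)
    · apply ContinuousOn.add
      apply ContinuousOn.add
      · exact (ContinuousOn.mul (by fun_prop)
          (cont_log1m (fun z hz => by have := hz.2; linarith))).sub continuousOn_id
      · fun_prop
      · fun_prop
    · intro s hs
      rw [interior_Icc] at hs
      have hs1 : s < 1 := by linarith [hs.2]
      exact (((hd_N hs1).add ((hasDerivAt_pow 2 s).div_const 2)).add
        ((hasDerivAt_pow 3 s).div_const 3)).differentiableAt.differentiableWithinAt
    · intro s hs
      rw [interior_Icc] at hs
      have hs1 : s < 1 := by linarith [hs.2]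
      have hd := ((hd_N hs1).add ((hasDerivAt_pow 2 s).div_const 2)).add
        ((hasDerivAt_pow 3 s).div_const 3)
      erw [hd.deriv]; norm_num
      have := l4a hs.1.le (le_of_lt (lt_of_lt_of_le hs.2 h1))
      nlinarith
  have := key (left_mem_Icc.mpr h0) (right_mem_Icc.mpr h0) h0
  simpa using this

private lemma hd_F (C K : ℝ) {s : ℝ} (hs0 : s ≠ 0) (hs1 : s < 1) :
    HasDerivAt (fun t : ℝ => C + K * (((t - 1) * Real.log (1 - t) - t) / t ^ 2))
      (K * ((Real.log (1 - s) * s ^ 2 - ((s - 1) * Real.log (1 - s) - s) * (2 * s)) / (s ^ 2) ^ 2)) s := by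
  have := (((hd_N hs1).div (hasDerivAt_pow 2 s) (pow_ne_zero 2 hs0)).const_mul K).const_add C
  convert this using 1 <;> first | rfl | norm_num
  

private lemma cont_F (C K : ℝ) {s : Set ℝ} (h : ∀ z ∈ s, z ≠ 0 ∧ z < 1) :
    ContinuousOn (fun t : ℝ => C + K * (((t - 1) * Real.log (1 - t) - t) / t ^ 2)) s := by
  apply ContinuousOn.add continuousOn_const
  apply ContinuousOn.mul continuousOn_const
  apply ContinuousOn.div
  · exact ((continuousOn_id.sub continuousOn_const).mul
      (cont_log1m (fun z hz => (h z hz).2))).sub continuousOn_id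
  · fun_prop
  · intro z hz
    exact pow_ne_zero 2 (h z hz).1

private lemma strictAnti_F (C K : ℝ) (hK : 0 < K) {x y : ℝ} (hx : 0 < x) (hy : y < 1) :
    StrictAntiOn (fun t : ℝ => C + K * (((t - 1) * Real.log (1 - t) - t) / t ^ 2)) (Icc x y) := by
  apply strictAntiOn_of_deriv_neg (convex_Icc x y)
  · exact cont_F C K (fun z hz => ⟨(lt_of_lt_of_le hx hz.1).ne', lt_of_le_of_lt hz.2 hy⟩)
  · intro s hs
    rw [interior_Icc] at hs
    have hs0 : 0 < s := hx.trans hs.1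
    have hs1 : s < 1 := hs.2.trans hy
    rw [(hd_F C K hs0.ne' hs1).deriv]
    have hφ := l3 hs0 hs1
    have hnum : Real.log (1 - s) * s ^ 2 - ((s - 1) * Real.log (1 - s) - s) * (2 * s)
        = s * ((2 - s) * Real.log (1 - s) + 2 * s) := by ring
    rw [hnum]
    apply mul_neg_of_pos_of_neg hK
    apply div_neg_of_neg_of_pos (mul_neg_of_pos_of_neg hs0 hφ) (by positivity)

theorem stmt_14 (ω : ℝ) (hω : 0 < ω) :
    ∃ ε > (0:ℝ), ∀ c : ℝ, 0 < 2*ω - c^2 → 2*ω - c^2 < ε →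
      ∀ a b : ℝ → ℝ,
        (∀ η, a η = -(c^2 - 4*ω) * η^2 + 4*ω*((η - 1) * Real.log (1 - η) - η)) →
        (∀ η, b η = if η = 0 then 2*ω - c^2 else a η / η^2) →
        StrictAntiOn b (Set.Icc 0 (3*(2*ω - c^2)/(2*ω))) ∧
        b 0 = 2*ω - c^2 ∧ 0 < b 0 ∧
        b (3*(2*ω - c^2)/(2*ω)) ≤ 0 ∧
        (∃! σ₁ : ℝ, σ₁ ∈ Set.Ioc 0 (3*(2*ω - c^2)/(2*ω)) ∧ b σ₁ = 0) := by
  refine ⟨2*ω/3, by positivity, ?_⟩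
  intro c hδ hδε a b ha hb
  set δ := 2*ω - c^2 with hδdef
  set σ₀ := 3*δ/(2*ω) with hσ₀def
  set C := -(c^2 - 4*ω) with hCdef
  set K := 4*ω with hKdef
  set F : ℝ → ℝ := fun t => C + K * (((t - 1) * Real.log (1 - t) - t) / t ^ 2) with hFdef
  clear_value δ σ₀ C K F
  have hK : 0 < K := by rw [hKdef]; positivity
  have hF : ∀ t : ℝ, F t = C + K * (((t - 1) * Real.log (1 - t) - t) / t ^ 2) :=
    fun t => by rw [hFdef]
  have hσ₀pos : 0 < σ₀ := by rw [hσ₀def]; positivity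
  have hσ₀lt1 : σ₀ < 1 := by
    rw [hσ₀def, div_lt_one (by positivity)]
    linarith
  have hbF : ∀ z : ℝ, z ≠ 0 → b z = F z := by
    intro z hz
    rw [hb, if_neg hz, ha, hF]
    field_simp
  have hb0 : b 0 = δ := by rw [hb]; simp
  -- upper bound
  have hupper : ∀ z : ℝ, 0 < z → z < 1 → F z ≤ δ - 2*ω*z/3 := by
    intro z hz0 hz1
    have hN := l2 hz0.le hz1
    have h1 : ((z - 1) * Real.log (1 - z) - z) / z ^ 2 ≤ (-(z^2)/2 - z^3/6) / z ^ 2 :=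
      (div_le_div_iff_of_pos_right (by positivity)).mpr (by linarith)
    have h2 : (-(z^2)/2 - z^3/6) / z ^ 2 = -(1/2) - z/6 := by
      field_simp
    rw [h2] at h1
    have h3 : K * (((z - 1) * Real.log (1 - z) - z) / z ^ 2) ≤ K * (-(1/2) - z/6) :=
      mul_le_mul_of_nonneg_left h1 hK.le
    rw [hF]
    rw [hCdef, hKdef] at *
    nlinarith
  -- lower bound
  have hlower : ∀ z : ℝ, 0 < z → z ≤ 1/2 → δ - 4*ω*z/3 ≤ F z := by
    intro z hz0 hz1
    have hN := l4 hz0.le hz1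
    have h1 : (-(z^2)/2 - z^3/3) / z ^ 2 ≤ ((z - 1) * Real.log (1 - z) - z) / z ^ 2 :=
      (div_le_div_iff_of_pos_right (by positivity)).mpr (by linarith)
    have h2 : (-(z^2)/2 - z^3/3) / z ^ 2 = -(1/2) - z/3 := by
      field_simp
    rw [h2] at h1
    have h3 : K * (-(1/2) - z/3) ≤ K * (((z - 1) * Real.log (1 - z) - z) / z ^ 2) :=
      mul_le_mul_of_nonneg_left h1 hK.le
    rw [hF]
    rw [hCdef, hKdef] at *
    nlinarith
  -- strict antitone
  have hanti : StrictAntiOn b (Icc 0 σ₀) := by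
    intro p hp q hq hpq
    rcases eq_or_lt_of_le hp.1 with hp0 | hp0
    · rw [← hp0] at hpq ⊢
      rw [hb0, hbF q hpq.ne']
      have := hupper q hpq (lt_of_le_of_lt hq.2 hσ₀lt1)
      have hq3 : 0 < 2*ω*q/3 := by positivity
      linarith
    · have hq1 : q < 1 := lt_of_le_of_lt hq.2 hσ₀lt1
      have hSA := strictAnti_F C K hK hp0 hq1
      rw [hbF p hp0.ne', hbF q (hp0.trans hpq).ne', hF p, hF q]
      simpa using hSA (left_mem_Icc.mpr hpq.le) (right_mem_Icc.mpr hpq.le) hpq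
  -- b at sigma0
  have hbσ₀ : b σ₀ ≤ 0 := by
    rw [hbF σ₀ hσ₀pos.ne']
    have := hupper σ₀ hσ₀pos hσ₀lt1
    have hc : 2*ω*σ₀/3 = δ := by
      rw [hσ₀def]
      field_simp
    linarith
  -- b at sigma0/4
  have ht₁pos : 0 < σ₀/4 := by positivity
  have ht₁le : σ₀/4 ≤ 1/2 := by linarith
  have hbt₁ : δ/2 ≤ b (σ₀/4) := by
    rw [hbF _ ht₁pos.ne']
    have := hlower (σ₀/4) ht₁pos ht₁le
    have hc : 4*ω*(σ₀/4)/3 = δ/2 := by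
      rw [hσ₀def]
      field_simp
    linarith
  -- IVT
  have hcont : ContinuousOn b (Icc (σ₀/4) σ₀) := by
    apply (cont_F C K (s := Icc (σ₀/4) σ₀) ?_).congr
    · intro z hz
      exact (hbF z (lt_of_lt_of_le ht₁pos hz.1).ne').trans (hF z)
    · intro z hz
      exact ⟨(lt_of_lt_of_le ht₁pos hz.1).ne', lt_of_le_of_lt hz.2 hσ₀lt1⟩
  have hsub := intermediate_value_Icc' (by linarith : σ₀/4 ≤ σ₀) hcont
  have h0mem : (0:ℝ) ∈ Icc (b σ₀) (b (σ₀/4)) := ⟨hbσ₀, by linarith⟩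
  obtain ⟨σ₁, hσ₁mem, hσ₁⟩ := hsub h0mem
  have hσ₁pos : 0 < σ₁ := lt_of_lt_of_le ht₁pos hσ₁mem.1
  refine ⟨hanti, hb0, by rw [hb0]; exact hδ, hbσ₀, σ₁, ⟨⟨hσ₁pos, hσ₁mem.2⟩, hσ₁⟩, ?_⟩
  intro σ hσ
  exact hanti.injOn ⟨hσ.1.1.le, hσ.1.2⟩ ⟨hσ₁pos.le, hσ₁mem.2⟩ (hσ.2.trans hσ₁.symm)
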